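/- Let λ ≤ π be permutations and let π̂ = (π̂_1,…,π̂_t) be the adjacency decomposition of π. For any two embeddings η and ψ of λ in π and any index 1 ≤ i ≤ t, the permutations η̂_i and ψ̂_i are comparable in the permutation pattern poset; hence for any set S of embeddings of λ in π, {η̂_i : η ∈ S} is a chain. -/

import Mathlib

open scoped Classical

set_option maxHeartbeats 1000000

/-! ## The permutation pattern poset -/

/-- The type of all (finite) permutations: a permutation of length `n` is an element of
`Equiv.Perm (Fin n)`; the letter in position `i` is `p.2 i` (letters compared via the
order on `Fin n`). -/
abbrev PermPat : Type := Σ n : ℕ, Equiv.Perm (Fin n)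

/-- Pattern containment: `PatLe σ π` iff `π` has a subsequence in the same relative order
as `σ`, i.e. there is an occurrence of `σ` in `π`. -/
def PatLe (p q : PermPat) : Prop :=
  ∃ f : Fin p.1 ↪o Fin q.1, ∀ i j : Fin p.1, p.2 i < p.2 j ↔ q.2 (f i) < q.2 (f j)

lemma patLe_refl (p : PermPat) : PatLe p p := by
  refine ⟨(OrderIso.refl (Fin p.1)).toOrderEmbedding, fun i j => ?_⟩
  simp

lemma patLe_trans {p q r : PermPat} (h1 : PatLe p q) (h2 : PatLe q r) : PatLe p r := by
  obtain ⟨f, hf⟩ := h1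
  obtain ⟨g, hg⟩ := h2
  exact ⟨f.trans g, fun i j => (hf i j).trans (hg (f i) (f j))⟩

lemma PatLe.len_le {p q : PermPat} (h : PatLe p q) : p.1 ≤ q.1 := by
  obtain ⟨f, -⟩ := h
  simpa using Fintype.card_le_of_embedding f.toEmbedding

lemma StrictMono.fin_apply_eq {n : ℕ} {f : Fin n → Fin n} (hf : StrictMono f) (i : Fin n) :
    f i = i := by
  have hle : ∀ m : ℕ, ∀ j : Fin n, j.val = m → j.val ≤ (f j).val := by
    intro m
    induction m with
    | zero => intro j hj; omega
    | succ m ih =>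
      intro j hj
      have hm : m < n := by omega
      have h1 : f ⟨m, hm⟩ < f j := hf (by simp [Fin.lt_def]; omega)
      have h2 := ih ⟨m, hm⟩ rfl
      simp only [Fin.lt_def] at h1
      simp only [Fin.val_mk] at h1 h2
      omega
  have hge : ∀ m : ℕ, ∀ j : Fin n, j.val + m + 1 = n → (f j).val ≤ j.val := by
    intro m
    induction m with
    | zero => intro j hj; have := (f j).isLt; omega
    | succ m ih =>
      intro j hj
      have hs : j.val + 1 < n := by omega
      have h1 : f j < f ⟨j.val + 1, hs⟩ := hf (by simp [Fin.lt_def])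
      have h2 := ih ⟨j.val + 1, hs⟩ (by simp only [Fin.val_mk]; omega)
      simp only [Fin.lt_def] at h1
      simp only [Fin.val_mk] at h1 h2
      omega
  exact Fin.ext (le_antisymm (hge (n - 1 - i.val) i (by have := i.isLt; omega)) (hle i.val i rfl))

lemma patLe_antisymm {p q : PermPat} (hpq : PatLe p q) (hqp : PatLe q p) : p = q := by
  obtain ⟨k, σ⟩ := p
  obtain ⟨n, π⟩ := q
  have hkn : k = n := le_antisymm hpq.len_le hqp.len_le
  subst hkn
  obtain ⟨f, hf⟩ := hpq
  have hfid : ∀ i, f i = i := fun i => f.strictMono.fin_apply_eq i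
  have key : ∀ i j : Fin k, σ i < σ j ↔ π i < π j := by
    intro i j
    simpa [hfid] using hf i j
  have hmono : StrictMono (fun a => π (σ.symm a)) := by
    intro a b hab
    have : σ (σ.symm a) < σ (σ.symm b) := by simpa using hab
    exact (key _ _).mp this
  have hid : ∀ a, π (σ.symm a) = a := fun a => hmono.fin_apply_eq a
  have hσπ : σ = π := by
    apply Equiv.ext
    intro x
    have := hid (σ x)
    simpa using this.symm
  rw [hσπ]

/-- The permutation pattern poset `𝒫`. -/
instance : PartialOrder PermPat where
  le := PatLe
  le_refl := patLe_refl
  le_trans _ _ _ := patLe_trans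
  le_antisymm _ _ := patLe_antisymm

lemma PermPat.le_def {p q : PermPat} : p ≤ q ↔ PatLe p q := Iff.rfl

/-! ## The Möbius function of the pattern poset

`permMu` is the Möbius function of the pattern poset: `μ(σ,σ) = 1`,
`μ(σ,π) = -∑_{σ ≤ z < π} μ(σ,z)` for `σ < π`, and `μ(σ,π) = 0` if `σ ≰ π`.
(Every `z < π` is of length strictly smaller than `π`, so the inner sum ranges over
the permutations of each length `m < |π|`.) -/
noncomputable def permMu (p q : PermPat) : ℤ :=
  if p = q then 1
  else if PatLe p q then
    - ∑ m : Fin q.1, ∑ z : Equiv.Perm (Fin m.1),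
        if PatLe p ⟨m.1, z⟩ ∧ PatLe ⟨m.1, z⟩ q then permMu p ⟨m.1, z⟩ else 0
  else 0
termination_by q.1
decreasing_by exact m.isLt

/-! ## The Möbius function of a finite poset -/

/-- The Möbius function `μ(a,b)` of a finite poset. -/
noncomputable def muPair {X : Type*} [PartialOrder X] [Fintype X] (a b : X) : ℤ :=
  if a = b then 1
  else if a ≤ b then
    - ∑ z ∈ (Finset.univ.filter fun z : X => a ≤ z ∧ z < b).attach, muPair a z.1
  else 0
termination_by Set.ncard {z : X | z < b}
decreasing_by
  rename_i z
  have hz : z.1 < b := ((Finset.mem_filter.mp z.2).2).2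
  exact Set.ncard_lt_ncard
    ((Set.ssubset_iff_of_subset (fun w hw => lt_trans hw hz)).mpr ⟨z.1, hz, fun hmem => absurd hmem (by exact lt_irrefl _)⟩)
    (Set.toFinite _)

instance instFiniteOption' {α : Type*} [Finite α] : Finite (Option α) :=
  Finite.of_equiv (α ⊕ PUnit.{1}) (Equiv.optionEquivSumPUnit.{0} α).symm
instance {α : Type*} [Finite α] : Finite (WithTop α) := inferInstanceAs (Finite (Option α))
instance {α : Type*} [Finite α] : Finite (WithBot α) := inferInstanceAs (Finite (Option α))
instance {α : Type*} [Fintype α] : Fintype (WithTop α) := inferInstanceAs (Fintype (Option α))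
instance {α : Type*} [Fintype α] : Fintype (WithBot α) := inferInstanceAs (Fintype (Option α))

/-- For a finite poset `X`, `muHat X` is `μ(0̂,1̂)` computed in the poset obtained from `X`
by adjoining a new bottom element `0̂` and a new top element `1̂`.  (For infinite `X` the
junk value `0` is returned.) -/
noncomputable def muHat (X : Type*) [PartialOrder X] : ℤ :=
  if h : Finite X then
    letI := h
    letI : Fintype (WithBot (WithTop X)) := Fintype.ofFinite _
    muPair (⊥ : WithBot (WithTop X)) ⊤
  else 0

/-! ## Adjacencies, embeddings, normality -/

/-- The position one step before `j` (or `j` itself when `j = 0`). -/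
def prevPos {n : ℕ} (j : Fin n) : Fin n := ⟨j.val - 1, lt_of_le_of_lt (Nat.sub_le _ _) j.isLt⟩

/-- `Linked π j` says position `j` is linked to the preceding position, i.e. the letters in
positions `j-1, j` have consecutive values.  These are exactly the positions lying in the
tail of some adjacency of `π` (an adjacency is a maximal factor of consecutively valued
increasing or decreasing letters; its tail is all but its first letter). -/
def Linked {n : ℕ} (π : Equiv.Perm (Fin n)) (j : Fin n) : Prop :=
  0 < j.val ∧ ((π j).val + 1 = (π (prevPos j)).val ∨ (π (prevPos j)).val + 1 = (π j).val)

/-- The number of adjacencies (maximal linked runs) of `π`. -/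
noncomputable def numBlocks {n : ℕ} (π : Equiv.Perm (Fin n)) : ℕ :=
  (Finset.univ.filter fun j : Fin n => ¬ Linked π j).card

/-- The index (starting from 0) of the adjacency of `π` containing position `j`. -/
noncomputable def blockIdx {n : ℕ} (π : Equiv.Perm (Fin n)) (j : Fin n) : ℕ :=
  (Finset.univ.filter fun m : Fin n => ¬ Linked π m ∧ m ≤ j).card - 1

/-- The set of positions in the `i`-th adjacency of `π`. -/
noncomputable def blockF {n : ℕ} (π : Equiv.Perm (Fin n)) (i : ℕ) : Finset (Fin n) :=
  Finset.univ.filter fun j => blockIdx π j = i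

/-- The standardization of an injective tuple `v` of values in `Fin n`: the permutation of
`Fin m` whose letters are in the same relative order as `v`. -/
noncomputable def stdize {m n : ℕ} (v : Fin m → Fin n) (hv : Function.Injective v) :
    Equiv.Perm (Fin m) :=
  (Equiv.ofInjective v hv).trans
    (monoEquivOfFin (Set.range v)
      (by rw [Set.card_range_of_injective hv, Fintype.card_fin])).symm.toEquiv

/-- The pattern (as an abstract permutation) formed by the letters of `π` in the set `E`
of positions. -/
noncomputable def patternOf {n : ℕ} (π : Equiv.Perm (Fin n)) (E : Finset (Fin n)) : PermPat :=
  ⟨E.card, stdize (fun i => π ((E.orderIsoOfFin rfl) i))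
    (by
      intro i j hij
      exact (E.orderIsoOfFin rfl).injective (Subtype.coe_injective (π.injective hij)))⟩

/-- `E` is (the set of positions of the nonzero entries of) an embedding of `p` in `π`:
the letters of `π` in positions `E` form an occurrence of `p`. -/
def IsEmb (p : PermPat) {n : ℕ} (π : Equiv.Perm (Fin n)) (E : Finset (Fin n)) : Prop :=
  patternOf π E = p

/-- An embedding (given by its set `E` of nonzero positions) is normal if every position in
the tail of an adjacency of `π` is nonzero. -/
def IsNormal {n : ℕ} (π : Equiv.Perm (Fin n)) (E : Finset (Fin n)) : Prop :=
  ∀ j, Linked π j → j ∈ E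

/-- `NE p π`: the number of normal embeddings of `p` in `π`. -/
noncomputable def NE (p : PermPat) {n : ℕ} (π : Equiv.Perm (Fin n)) : ℕ :=
  Set.ncard {E : Finset (Fin n) | IsEmb p π E ∧ IsNormal π E}

/-- An embedding is rightmost if, within each adjacency of `π`, all of its zero entries
precede all of its nonzero entries. -/
def IsRightmost {n : ℕ} (π : Equiv.Perm (Fin n)) (E : Finset (Fin n)) : Prop :=
  ∀ i j : Fin n, blockIdx π i = blockIdx π j → i ≤ j → i ∈ E → j ∈ E

/-- Membership in `Ê^{p,π}`, the set of rightmost embeddings of `p` in `π`. -/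
def EhatMem (p : PermPat) {n : ℕ} (π : Equiv.Perm (Fin n)) (E : Finset (Fin n)) : Prop :=
  IsEmb p π E ∧ IsRightmost π E

/-- Membership in `EZ^{p,π}`: `S` is a nonempty set of rightmost embeddings of `p` in `π`
whose zero sets have empty intersection (every position is nonzero in some member). -/
def EZmem (p : PermPat) {n : ℕ} (π : Equiv.Perm (Fin n)) (S : Finset (Finset (Fin n))) : Prop :=
  S.Nonempty ∧ (∀ E ∈ S, EhatMem p π E) ∧ ∀ j : Fin n, ∃ E ∈ S, j ∈ E

/-- The sum `∑_{S ∈ EZ^{p,π}} (-1)^{|S|}`. -/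
noncomputable def EZsum (p : PermPat) {n : ℕ} (π : Equiv.Perm (Fin n)) : ℤ :=
  ∑ S ∈ Finset.univ.filter (fun S : Finset (Finset (Fin n)) => EZmem p π S), (-1 : ℤ) ^ S.card

/-! ## The adjacency decomposition and the posets `P(η)`, `A^{σ,π}` -/

/-- `π̂`, the adjacency decomposition of `π`, as a tuple of permutations. -/
noncomputable def Phat {n : ℕ} (π : Equiv.Perm (Fin n)) : Fin (numBlocks π) → PermPat :=
  fun i => patternOf π (blockF π i.val)

/-- `η̂`, the decomposition of an embedding (with nonzero positions `E`) along the
adjacencies of `π`. -/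
noncomputable def etaHat {n : ℕ} (π : Equiv.Perm (Fin n)) (E : Finset (Fin n)) :
    Fin (numBlocks π) → PermPat :=
  fun i => patternOf π (E.filter fun j => blockIdx π j = i.val)

/-- The product poset `P(η) = [η̂_1,π̂_1] × ⋯ × [η̂_t,π̂_t]`, as a subset of the product of
copies of the pattern poset indexed by the adjacencies of `π`. -/
noncomputable def Pemb {n : ℕ} (π : Equiv.Perm (Fin n)) (E : Finset (Fin n)) :
    Set (Fin (numBlocks π) → PermPat) :=
  Set.Icc (etaHat π E) (Phat π)

/-- `P(η)°`: the product poset `P(η)` with its bottom element `η̂` and top element `π̂`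
removed. -/
noncomputable def PembO {n : ℕ} (π : Equiv.Perm (Fin n)) (E : Finset (Fin n)) :
    Set (Fin (numBlocks π) → PermPat) :=
  Pemb π E \ {etaHat π E, Phat π}

/-- `A^{p,π} = ⋃_{η ∈ Ê^{p,π}} P(η)°`. -/
noncomputable def Aspace (p : PermPat) {n : ℕ} (π : Equiv.Perm (Fin n)) :
    Set (Fin (numBlocks π) → PermPat) :=
  ⋃ E ∈ {E : Finset (Fin n) | EhatMem p π E}, PembO π E

/-! ## Sundry notions -/

/-- The number of descents of a permutation. -/
noncomputable def desNum {n : ℕ} (π : Equiv.Perm (Fin n)) : ℕ :=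
  (Finset.univ.filter fun j : Fin n => ∃ h : j.val + 1 < n, π ⟨j.val + 1, h⟩ < π j).card

/-- The direct sum of two permutations. -/
def dsum {a b : ℕ} (σ : Equiv.Perm (Fin a)) (τ : Equiv.Perm (Fin b)) :
    Equiv.Perm (Fin (a + b)) :=
  finSumFinEquiv.symm.trans ((Equiv.sumCongr σ τ).trans finSumFinEquiv)

/-- A permutation is indecomposable if it is nonempty and not the direct sum of two
nonempty permutations. -/
def Indecomp (p : PermPat) : Prop :=
  0 < p.1 ∧ ¬ ∃ (a b : ℕ) (σ : Equiv.Perm (Fin a)) (τ : Equiv.Perm (Fin b)),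
    0 < a ∧ 0 < b ∧ p = ⟨a + b, dsum σ τ⟩

/-- `dpow lam m = lam ⊕ ⋯ ⊕ lam` (`m` summands). -/
def dpow {l : ℕ} (lam : Equiv.Perm (Fin l)) : (m : ℕ) → Equiv.Perm (Fin (m * l))
  | 0 => (finCongr (Nat.zero_mul l).symm).permCongr 1
  | m + 1 => (finCongr (by ring : m * l + l = (m + 1) * l)).permCongr (dsum (dpow lam m) lam)

/-- Direct sum of permutations, on `PermPat`. -/
def dsumP (p q : PermPat) : PermPat := ⟨p.1 + q.1, dsum p.2 q.2⟩

/-- The direct sum of a list of permutations. -/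
def dsumList : List PermPat → PermPat
  | [] => ⟨0, 1⟩
  | p :: L => dsumP p (dsumList L)

/-- The increasing permutation `ι_n = 12⋯n`. -/
def iota (n : ℕ) : PermPat := ⟨n, 1⟩


/-! ### Auxiliary lemmas for Statement 13 -/

section Aux

variable {n : ℕ}

lemma linked_between (π : Equiv.Perm (Fin n)) {a b : Fin n}
    (hab : a ≤ b) (hidx : blockIdx π a = blockIdx π b) :
    ∀ m : Fin n, a < m → m ≤ b → Linked π m := by
  intro m ham hmb
  by_contra hL
  have hpos : 0 < n := Nat.pos_of_ne_zero (by rintro rfl; exact a.elim0)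
  set Sa := Finset.univ.filter (fun m : Fin n => ¬ Linked π m ∧ m ≤ a) with hSa
  set Sb := Finset.univ.filter (fun m : Fin n => ¬ Linked π m ∧ m ≤ b) with hSb
  have hsub : Sa ⊆ Sb := by
    intro x hx
    simp only [hSa, hSb, Finset.mem_filter, Finset.mem_univ, true_and] at hx ⊢
    exact ⟨hx.1, le_trans hx.2 hab⟩
  have hz : (⟨0, hpos⟩ : Fin n) ∈ Sa := by
    simp only [hSa, Finset.mem_filter, Finset.mem_univ, true_and]
    refine ⟨fun hl => ?_, by simp [Fin.le_def]⟩
    exact absurd hl.1 (by simp)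
  have hcards : Sa.card ≤ Sb.card := Finset.card_le_card hsub
  have hca : 1 ≤ Sa.card := Finset.card_pos.mpr ⟨_, hz⟩
  have hidx' : Sa.card - 1 = Sb.card - 1 := hidx
  have hceq : Sb.card ≤ Sa.card := by omega
  have heq : Sa = Sb := Finset.eq_of_subset_of_card_le hsub hceq
  have hmSb : m ∈ Sb := by
    simp only [hSb, Finset.mem_filter, Finset.mem_univ, true_and]
    exact ⟨hL, hmb⟩
  rw [← heq] at hmSb
  simp only [hSa, Finset.mem_filter, Finset.mem_univ, true_and] at hmSb
  exact absurd hmSb.2 (not_le.mpr ham)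

lemma run_formula (π : Equiv.Perm (Fin n)) {a b : Fin n} (hab : a ≤ b)
    (hlink : ∀ m : Fin n, a < m → m ≤ b → Linked π m) :
    (∀ j k : Fin n, a ≤ j → j ≤ k → k ≤ b →
        (π k).val = (π j).val + (k.val - j.val)) ∨
    (∀ j k : Fin n, a ≤ j → j ≤ k → k ≤ b →
        (π j).val = (π k).val + (k.val - j.val)) := by
  rcases eq_or_lt_of_le hab with heq | hlt
  · subst heq
    left
    intro j k hj hk hkb
    have : j = k := le_antisymm hk (le_trans hkb hj)
    subst this
    omega
  · have h1 : a.val + 1 < n := lt_of_le_of_lt (by exact hlt) b.isLt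
    set a1 : Fin n := ⟨a.val + 1, h1⟩ with ha1
    have hla1 : Linked π a1 := hlink a1 (by simp [Fin.lt_def, ha1]) (by
      simp only [Fin.le_def, ha1]; exact hlt)
    have hprev : prevPos a1 = a := by
      simp only [prevPos, ha1]
      exact Fin.ext (by simp)
    have hla2 := hla1.2
    rw [hprev] at hla2
    -- helper: value formula along the run
    have key : ∀ (inc : Bool),
        (if inc then (π a).val + 1 = (π a1).val else (π a1).val + 1 = (π a).val) →
        ∀ t (ht : a.val + t < n), a.val + t ≤ b.val →
          (if inc then (π ⟨a.val + t, ht⟩).val = (π a).val + t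
           else (π ⟨a.val + t, ht⟩).val + t = (π a).val) := by
      intro inc hinc t
      induction t using Nat.strong_induction_on with
      | _ t ih =>
        match t with
        | 0 =>
          intro ht _
          have : (⟨a.val + 0, ht⟩ : Fin n) = a := Fin.ext (by simp)
          rw [this]
          cases inc <;> simp
        | 1 =>
          intro ht _
          have : (⟨a.val + 1, ht⟩ : Fin n) = a1 := rfl
          rw [this]
          cases inc <;> simp only [if_true, if_false, Bool.false_eq_true] at hinc ⊢ <;> omega
        | (s+2) =>
          intro ht hb2
          have hs1 : a.val + (s+1) < n := by omega
          have hs0 : a.val + s < n := by omega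
          have ih1 := ih (s+1) (by omega) hs1 (by omega)
          have ih0 := ih s (by omega) hs0 (by omega)
          set m : Fin n := ⟨a.val + (s+2), ht⟩ with hm
          have hlm : Linked π m := hlink m (by simp [Fin.lt_def, hm]) (by
            simp only [Fin.le_def, hm]; omega)
          have hprevm : prevPos m = ⟨a.val + (s+1), hs1⟩ := by
            simp only [prevPos, hm]
            exact Fin.ext (by simp)
          have hlm2 := hlm.2
          rw [hprevm] at hlm2
          have hinj : ∀ x y : Fin n, (π x).val = (π y).val → x = y := by
            intro x y hxy
            exact π.injective (Fin.ext hxy)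
          cases inc with
          | true =>
            simp only [if_true] at ih1 ih0 ⊢
            rcases hlm2 with hc | hc
            · exfalso
              have hveq : (π m).val = (π (⟨a.val + s, hs0⟩ : Fin n)).val := by omega
              have heqm : m = (⟨a.val + s, hs0⟩ : Fin n) := hinj _ _ hveq
              rw [hm] at heqm
              have : a.val + (s+2) = a.val + s := congrArg Fin.val heqm
              omega
            · omega
          | false =>
            simp only [if_false, Bool.false_eq_true] at ih1 ih0 ⊢
            rcases hlm2 with hc | hc
            · omega
            · exfalso
              have hveq : (π m).val = (π (⟨a.val + s, hs0⟩ : Fin n)).val := by omega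
              have heqm : m = (⟨a.val + s, hs0⟩ : Fin n) := hinj _ _ hveq
              rw [hm] at heqm
              have : a.val + (s+2) = a.val + s := congrArg Fin.val heqm
              omega
    have general : ∀ (inc : Bool),
        (∀ t (ht : a.val + t < n), a.val + t ≤ b.val →
          (if inc then (π ⟨a.val + t, ht⟩).val = (π a).val + t
           else (π ⟨a.val + t, ht⟩).val + t = (π a).val)) →
        ∀ j k : Fin n, a ≤ j → j ≤ k → k ≤ b →
          (if inc then (π k).val = (π j).val + (k.val - j.val)
           else (π j).val = (π k).val + (k.val - j.val)) := by
      intro inc hC j k hj hk hkb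
      have hjf : j = ⟨a.val + (j.val - a.val), by omega⟩ := Fin.ext (by simp; omega)
      have hkf : k = ⟨a.val + (k.val - a.val), by omega⟩ := Fin.ext (by simp; omega)
      have hCj := hC (j.val - a.val) (by omega) (by
        have := hk.trans hkb; simp only [Fin.le_def] at hj hkb this ⊢; omega)
      have hCk := hC (k.val - a.val) (by omega) (by
        simp only [Fin.le_def] at hkb; omega)
      rw [← hjf] at hCj
      rw [← hkf] at hCk
      simp only [Fin.le_def] at hj hk hkb
      cases inc <;> simp only [if_true, if_false, Bool.false_eq_true] at hCj hCk ⊢ <;> omega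
    rcases hla2 with hc | hc
    · right
      have := general false (key false (by simpa using hc))
      simpa using this
    · left
      have := general true (key true (by simpa using hc))
      simpa using this

end Aux


lemma block_dir (π : Equiv.Perm (Fin n)) (i : ℕ) :
    ∃ s : Bool, ∀ j k : Fin n, blockIdx π j = i → blockIdx π k = i → j < k →
      (if s then π j < π k else π k < π j) := by
  set Bl := Finset.univ.filter (fun j : Fin n => blockIdx π j = i) with hBl
  by_cases hne : Bl.Nonempty
  · set a := Bl.min' hne with ha
    set b := Bl.max' hne with hb
    have haB : a ∈ Bl := Bl.min'_mem hne
    have hbB : b ∈ Bl := Bl.max'_mem hne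
    have hai : blockIdx π a = i := by simpa [hBl] using haB
    have hbi : blockIdx π b = i := by simpa [hBl] using hbB
    have hab : a ≤ b := Bl.min'_le b hbB
    have hlink := linked_between π hab (hai.trans hbi.symm)
    rcases run_formula π hab hlink with hf | hf
    · refine ⟨true, fun j k hj hk hjk => ?_⟩
      have hjB : j ∈ Bl := by simp [hBl, hj]
      have hkB : k ∈ Bl := by simp [hBl, hk]
      have := hf j k (Bl.min'_le j hjB) (le_of_lt hjk) (Bl.le_max' k hkB)
      simp only [if_true]
      rw [Fin.lt_def] at hjk ⊢
      omega
    · refine ⟨false, fun j k hj hk hjk => ?_⟩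
      have hjB : j ∈ Bl := by simp [hBl, hj]
      have hkB : k ∈ Bl := by simp [hBl, hk]
      have := hf j k (Bl.min'_le j hjB) (le_of_lt hjk) (Bl.le_max' k hkB)
      simp only [if_false, Bool.false_eq_true]
      rw [Fin.lt_def] at hjk ⊢
      omega
  · refine ⟨true, fun j k hj _ _ => absurd ?_ hne⟩
    exact ⟨j, by simp [hBl, hj]⟩

lemma stdize_lt {m : ℕ} (v : Fin m → Fin n) (hv : Function.Injective v) (i j : Fin m) :
    stdize v hv i < stdize v hv j ↔ v i < v j := by
  simp only [stdize, Equiv.trans_apply]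
  set e := monoEquivOfFin (Set.range v)
      (by rw [Set.card_range_of_injective hv, Fintype.card_fin]) with he
  have key : ∀ x y : Set.range v, e.symm x < e.symm y ↔ (x : Fin n) < (y : Fin n) := by
    intro x y
    rw [OrderIso.lt_iff_lt]
    exact Iff.rfl
  exact key ⟨v i, Set.mem_range_self i⟩ ⟨v j, Set.mem_range_self j⟩

lemma pat_le_of_subsets (π : Equiv.Perm (Fin n)) (i : ℕ) (A B : Finset (Fin n))
    (hA : ∀ j ∈ A, blockIdx π j = i) (hB : ∀ j ∈ B, blockIdx π j = i)
    (hcard : A.card ≤ B.card) : PatLe (patternOf π A) (patternOf π B) := by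
  obtain ⟨s, hs⟩ := block_dir π i
  have hcmp : ∀ x y : Fin n, blockIdx π x = i → blockIdx π y = i →
      (π x < π y ↔ (if s then x < y else y < x)) := by
    intro x y hx hy
    rcases lt_trichotomy x y with h | h | h
    · have h1 := hs x y hx hy h
      cases s
      · simp only [Bool.false_eq_true, if_false] at h1 ⊢
        exact ⟨fun h2 => absurd h1 (asymm h2), fun h2 => absurd h (asymm h2)⟩
      · simp only [if_true] at h1 ⊢
        exact ⟨fun _ => h, fun _ => h1⟩
    · subst h
      cases s <;> simp
    · have h1 := hs y x hy hx h
      cases s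
      · simp only [Bool.false_eq_true, if_false] at h1 ⊢
        exact ⟨fun _ => h, fun _ => h1⟩
      · simp only [if_true] at h1 ⊢
        exact ⟨fun h2 => absurd h1 (asymm h2), fun h2 => absurd h (asymm h2)⟩
  refine ⟨Fin.castLEOrderEmb hcard, fun (x y : Fin A.card) => ?_⟩
  simp only [patternOf]
  erw [stdize_lt, stdize_lt]
  have hmemA : ∀ z : Fin A.card, ((A.orderIsoOfFin rfl z : Fin n)) ∈ A :=
    fun z => (A.orderIsoOfFin rfl z).2
  have hmemB : ∀ z : Fin B.card, ((B.orderIsoOfFin rfl z : Fin n)) ∈ B :=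
    fun z => (B.orderIsoOfFin rfl z).2
  rw [hcmp _ _ (hA _ (hmemA x)) (hA _ (hmemA y)),
      hcmp _ _ (hB _ (hmemB _)) (hB _ (hmemB _))]
  have hOA : ∀ z w : Fin A.card,
      ((A.orderIsoOfFin rfl z : Fin n)) < ((A.orderIsoOfFin rfl w : Fin n)) ↔ z < w := by
    intro z w
    rw [Subtype.coe_lt_coe, OrderIso.lt_iff_lt]
  have hOB : ∀ z w : Fin B.card,
      ((B.orderIsoOfFin rfl z : Fin n)) < ((B.orderIsoOfFin rfl w : Fin n)) ↔ z < w := by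
    intro z w
    rw [Subtype.coe_lt_coe, OrderIso.lt_iff_lt]
  have hcast : ∀ z w : Fin A.card,
      (Fin.castLEOrderEmb hcard) z < (Fin.castLEOrderEmb hcard) w ↔ z < w := by
    intro z w
    exact (Fin.castLEOrderEmb hcard).lt_iff_lt
  cases s <;> simp only [if_true, if_false, Bool.false_eq_true] <;>
    (rw [hOA, hOB]; exact (hcast _ _).symm)

/-- For any two embeddings `η, ψ` of `λ` in `π` and any adjacency index
`i`, the permutations `η̂_i` and `ψ̂_i` are comparable in the pattern poset; hence for any
set `S` of embeddings of `λ` in `π` the set `{η̂_i : η ∈ S}` is a chain. -/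
theorem etaHat_comparable {k n : ℕ} (lam : Equiv.Perm (Fin k)) (π : Equiv.Perm (Fin n))
    (hle : PatLe ⟨k, lam⟩ ⟨n, π⟩) :
    (∀ E F : Finset (Fin n), IsEmb ⟨k, lam⟩ π E → IsEmb ⟨k, lam⟩ π F →
      ∀ i : Fin (numBlocks π),
        PatLe (etaHat π E i) (etaHat π F i) ∨ PatLe (etaHat π F i) (etaHat π E i)) ∧
    (∀ S : Set (Finset (Fin n)), (∀ E ∈ S, IsEmb ⟨k, lam⟩ π E) →
      ∀ i : Fin (numBlocks π),
        IsChain (· ≤ ·) {q : PermPat | ∃ E ∈ S, q = etaHat π E i}) := by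
  have part1 : ∀ E F : Finset (Fin n), ∀ i : Fin (numBlocks π),
      PatLe (etaHat π E i) (etaHat π F i) ∨ PatLe (etaHat π F i) (etaHat π E i) := by
    intro E F i
    have hmemE : ∀ j ∈ E.filter (fun j => blockIdx π j = i.val), blockIdx π j = i.val :=
      fun j hj => (Finset.mem_filter.mp hj).2
    have hmemF : ∀ j ∈ F.filter (fun j => blockIdx π j = i.val), blockIdx π j = i.val :=
      fun j hj => (Finset.mem_filter.mp hj).2
    rcases le_total (E.filter fun j => blockIdx π j = i.val).card
        (F.filter fun j => blockIdx π j = i.val).card with h | h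
    · exact Or.inl (pat_le_of_subsets π i.val _ _ hmemE hmemF h)
    · exact Or.inr (pat_le_of_subsets π i.val _ _ hmemF hmemE h)
  refine ⟨fun E F _ _ i => part1 E F i, ?_⟩
  intro S _ i q1 hq1 q2 hq2 _
  obtain ⟨E, _, rfl⟩ := hq1
  obtain ⟨F, _, rfl⟩ := hq2
  exact part1 E F i
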